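/- arXiv:2208.06785 — 3 statements merged into one kernel-verified Lean document; each statement's English description precedes it below -/
import Mathlib

section
/- Let σ be a strategy. Then the coordinate process X = (X_1, X_2, ...) is conditionally identically distributed (c.i.d.) under P_σ if and only if for every n ≥ 0 and every A ∈ B one has σ_n(x, A) = ∫_S σ_{n+1}((x, y), A) σ_n(x, dy) for P_σ-almost all x ∈ S^n (for n = 0 this reads σ_0(A) = ∫_S σ_1(y, A) σ_0(dy)). -/
open MeasureTheory ProbabilityTheory
open scoped ENNReal

namespace PredictiveBayes

variable {S : Type*} [MeasurableSpace S]

/-- The finite-dimensional distributions determined by a strategy `κ`: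
`stratFDD κ n` is the law of `(X_1, …, X_n)` under `P_κ`, built by Ionescu–Tulcea
composition of the predictive kernels. -/
noncomputable def stratFDD (κ : ∀ n, Kernel (Fin n → S) S) : ∀ n, Measure (Fin n → S)
  | 0 => Measure.dirac (fun i : Fin 0 => i.elim0)
  | n + 1 => (stratFDD κ n).bind (fun x => ((κ n) x).map (Fin.snoc x))

/-- `P` is the Ionescu–Tulcea law `P_κ` of the strategy `κ`: its finite-dimensional
distributions are the ones obtained by composing the predictive kernels. -/
def IsStrategyLaw (κ : ∀ n, Kernel (Fin n → S) S) (P : Measure (ℕ → S)) : Prop :=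
  ∀ n, P.map (fun ω (i : Fin n) => ω i) = stratFDD κ n

/-- The process `Y` is conditionally identically distributed (c.i.d.) under `P`:
`Y 1 ∼ Y 0` and, for every `n ≥ 1` and `m ≥ n` (0-based indices, so that in 1-based
notation `Y_k` with `k > n` is compared with `Y_{n+1}` given `Y_1, …, Y_n`), the
conditional distributions of `Y m` and `Y n` given `(Y 0, …, Y (n-1))` coincide. -/
def CID {Ω : Type*} [MeasurableSpace Ω] (P : Measure Ω) (Y : ℕ → Ω → S) : Prop :=
  P.map (Y 1) = P.map (Y 0) ∧
  ∀ n m : ℕ, 1 ≤ n → n ≤ m → ∀ A : Set S, MeasurableSet A →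
    (P[Set.indicator ((Y m) ⁻¹' A) (fun _ => (1 : ℝ)) |
        MeasurableSpace.comap (fun ω (i : Fin n) => Y i ω) inferInstance])
      =ᵐ[P]
    (P[Set.indicator ((Y n) ⁻¹' A) (fun _ => (1 : ℝ)) |
        MeasurableSpace.comap (fun ω (i : Fin n) => Y i ω) inferInstance])

section Aux
lemma measurable_snoc_pair (n : ℕ) :
    Measurable (fun p : (Fin n → S) × S => (Fin.snoc p.1 p.2 : Fin (n + 1) → S)) := by
  refine measurable_pi_lambda _ (fun i => ?_)
  induction i using Fin.lastCases with
  | last => simpa using measurable_snd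
  | cast j =>
    simp only [Fin.snoc_castSucc]
    exact (measurable_pi_apply j).comp measurable_fst
lemma measurable_snoc_left {n : ℕ} (x : Fin n → S) :
    Measurable (fun y : S => (Fin.snoc x y : Fin (n + 1) → S)) :=
  (measurable_snoc_pair n).comp (measurable_prodMk_left)
variable (κ : ∀ n, Kernel (Fin n → S) S) [∀ n, IsMarkovKernel (κ n)]
noncomputable def snocK (n : ℕ) : Kernel (Fin n → S) (Fin (n + 1) → S) where
  toFun x := (κ n x).map (Fin.snoc x)
  measurable' := by
    refine Measure.measurable_of_measurable_coe _ fun s hs => ?_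
    have h1 : ∀ x : Fin n → S, (κ n x).map (Fin.snoc x) s
        = κ n x (Prod.mk x ⁻¹' ((fun p : (Fin n → S) × S =>
            (Fin.snoc p.1 p.2 : Fin (n + 1) → S)) ⁻¹' s)) := by
      intro x
      rw [Measure.map_apply (measurable_snoc_left x) hs]
      rfl
    simp_rw [h1]
    exact Kernel.measurable_kernel_prodMk_left ((measurable_snoc_pair n) hs)
lemma snocK_apply (n : ℕ) (x : Fin n → S) : snocK κ n x = (κ n x).map (Fin.snoc x) := rfl
instance (n : ℕ) : IsMarkovKernel (snocK κ n) := by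
  constructor; intro x; rw [snocK_apply]
  exact Measure.isProbabilityMeasure_map (measurable_snoc_left x).aemeasurable
noncomputable def predK : ∀ (d n : ℕ), Kernel (Fin n → S) S
  | 0, n => κ n
  | d + 1, n => (predK d (n + 1)) ∘ₖ (snocK κ n)
instance instMarkovPredK : ∀ (d n : ℕ), IsMarkovKernel (predK κ d n)
  | 0, _ => by rw [predK]; infer_instance
  | d + 1, n => by
    rw [predK]; have := instMarkovPredK d (n + 1); infer_instance
lemma predK_zero (n : ℕ) : predK κ 0 n = κ n := rfl
lemma predK_succ_apply (d n : ℕ) (x : Fin n → S) {A : Set S} (hA : MeasurableSet A) :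
    predK κ (d + 1) n x A = ∫⁻ y, predK κ d (n + 1) (Fin.snoc x y) A ∂(κ n x) := by
  rw [show predK κ (d+1) n = (predK κ d (n + 1)) ∘ₖ (snocK κ n) from rfl,
    Kernel.comp_apply' _ _ _ hA, snocK_apply,
    lintegral_map (Kernel.measurable_coe _ hA) (measurable_snoc_left x)]

-- NEW PART --

lemma stratFDD_zero' : stratFDD κ 0 = Measure.dirac (fun i : Fin 0 => i.elim0) := by
  rw [stratFDD]

lemma stratFDD_succ' (n : ℕ) : stratFDD κ (n + 1) = (stratFDD κ n).bind (snocK κ n) := by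
  rw [stratFDD]
  rfl

lemma lintegral_stratFDD_succ (n : ℕ) {f : (Fin (n + 1) → S) → ℝ≥0∞} (hf : Measurable f) :
    ∫⁻ z, f z ∂(stratFDD κ (n + 1))
      = ∫⁻ x, ∫⁻ y, f (Fin.snoc x y) ∂(κ n x) ∂(stratFDD κ n) := by
  rw [stratFDD_succ', Measure.lintegral_bind (snocK κ n).measurable.aemeasurable hf.aemeasurable]
  refine lintegral_congr fun x => ?_
  rw [snocK_apply, lintegral_map hf (measurable_snoc_left x)]

lemma stratFDD_succ_apply (n : ℕ) {B : Set (Fin (n + 1) → S)} (hB : MeasurableSet B) :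
    stratFDD κ (n + 1) B = ∫⁻ x, κ n x {y | Fin.snoc x y ∈ B} ∂(stratFDD κ n) := by
  rw [stratFDD_succ', Measure.bind_apply hB (snocK κ n).measurable.aemeasurable]
  refine lintegral_congr fun x => ?_
  rw [snocK_apply, Measure.map_apply (measurable_snoc_left x) hB]
  rfl

instance instProbStratFDD : ∀ n, IsProbabilityMeasure (stratFDD κ n)
  | 0 => by rw [stratFDD_zero']; infer_instance
  | n + 1 => by
    have := instProbStratFDD n
    constructor
    rw [stratFDD_succ_apply κ n MeasurableSet.univ]
    simp [measure_univ]

/-- measurability of the restriction map -/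
lemma measurable_init (n : ℕ) : Measurable (fun z : Fin (n + 1) → S => Fin.init z) :=
  measurable_pi_lambda _ (fun i => measurable_pi_apply _)

lemma init_proj (n : ℕ) (ω : ℕ → S) :
    Fin.init (fun i : Fin (n + 1) => ω i) = fun i : Fin n => ω i :=
  funext fun i => by simp [Fin.init]

lemma proj_preimage (n : ℕ) (t : Set (Fin n → S)) :
    (fun ω : ℕ → S => (fun i : Fin n => ω i)) ⁻¹' t
      = (fun ω : ℕ → S => (fun i : Fin (n + 1) => ω i)) ⁻¹' (Fin.init ⁻¹' t) := by
  ext ω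
  simp only [Set.mem_preimage, init_proj]

lemma measurable_proj (n : ℕ) : Measurable (fun ω : ℕ → S => (fun i : Fin n => ω i)) :=
  measurable_pi_lambda _ (fun i => measurable_pi_apply _)

/-- Core lemma: cylinder probabilities under `P` are computed by `predK`. -/
lemma core (P : Measure (ℕ → S)) (hP : IsStrategyLaw κ P) :
    ∀ (d n : ℕ) (t : Set (Fin n → S)), MeasurableSet t → ∀ (A : Set S), MeasurableSet A →
      P ((fun ω : ℕ → S => (fun i : Fin n => ω i)) ⁻¹' t ∩ (fun ω : ℕ → S => ω (n + d)) ⁻¹' A)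
        = ∫⁻ x in t, predK κ d n x A ∂(stratFDD κ n) := by
  intro d
  induction d with
  | zero =>
    intro n t ht A hA
    have hB : MeasurableSet ((Fin.init ⁻¹' t : Set (Fin (n+1) → S)) ∩
        ((fun z : Fin (n+1) → S => z (Fin.last n)) ⁻¹' A)) :=
      ((measurable_init n) ht).inter ((measurable_pi_apply _) hA)
    have hset : (fun ω : ℕ → S => (fun i : Fin n => ω i)) ⁻¹' t
          ∩ (fun ω : ℕ → S => ω (n + 0)) ⁻¹' A
        = (fun ω : ℕ → S => (fun i : Fin (n+1) => ω i)) ⁻¹'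
            ((Fin.init ⁻¹' t) ∩ ((fun z : Fin (n+1) → S => z (Fin.last n)) ⁻¹' A)) := by
      rw [Set.preimage_inter, ← proj_preimage]
      congr 1
    rw [hset, ← Measure.map_apply (measurable_proj (n+1)) hB, hP (n+1),
      stratFDD_succ_apply κ n hB]
    rw [show ∫⁻ x in t, predK κ 0 n x A ∂(stratFDD κ n)
        = ∫⁻ x, t.indicator (fun x => κ n x A) x ∂(stratFDD κ n) by
      rw [lintegral_indicator ht]; rfl]
    refine lintegral_congr fun x => ?_
    by_cases hx : x ∈ t
    · simp only [Set.indicator_of_mem hx]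
      congr 1
      ext y
      simp [Fin.init_snoc, Fin.snoc_last, hx]
    · simp only [Set.indicator_of_notMem hx]
      have : {y : S | Fin.snoc x y ∈ (Fin.init ⁻¹' t) ∩
          ((fun z : Fin (n+1) → S => z (Fin.last n)) ⁻¹' A)} = ∅ := by
        ext y
        simp [Fin.init_snoc, Fin.snoc_last, hx]
      rw [this]
      simp
  | succ d ih =>
    intro n t ht A hA
    have hnat : n + (d + 1) = (n + 1) + d := by omega
    rw [hnat, proj_preimage, ih (n + 1) (Fin.init ⁻¹' t) ((measurable_init n) ht) A hA]
    have hmeas : Measurable fun z : Fin (n+1) → S => predK κ d (n+1) z A :=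
      Kernel.measurable_coe _ hA
    rw [← lintegral_indicator ((measurable_init n) ht),
      lintegral_stratFDD_succ κ n (hmeas.indicator ((measurable_init n) ht)),
      ← lintegral_indicator ht]
    refine lintegral_congr fun x => ?_
    by_cases hx : x ∈ t
    · rw [Set.indicator_of_mem hx, predK_succ_apply κ d n x hA]
      refine lintegral_congr fun y => ?_
      rw [Set.indicator_of_mem]
      simpa [Fin.init_snoc] using hx
    · rw [Set.indicator_of_notMem hx]
      have : ∀ y : S, (Fin.init ⁻¹' t).indicator
          (fun z : Fin (n+1) → S => predK κ d (n+1) z A) (Fin.snoc x y) = 0 := by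
        intro y
        rw [Set.indicator_of_notMem]
        simpa [Fin.init_snoc] using hx
      simp [this]

lemma condexp_version (P : Measure (ℕ → S)) [IsProbabilityMeasure P] (hP : IsStrategyLaw κ P)
    (n d : ℕ) {A : Set S} (hA : MeasurableSet A) :
    (P[Set.indicator ((fun ω : ℕ → S => ω (n + d)) ⁻¹' A) (fun _ => (1 : ℝ)) |
        MeasurableSpace.comap (fun ω : ℕ → S => (fun i : Fin n => ω i)) inferInstance])
      =ᵐ[P] fun ω => (predK κ d n (fun i : Fin n => ω i) A).toReal := by
  have hπ : Measurable (fun ω : ℕ → S => (fun i : Fin n => ω i)) := measurable_proj n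
  have hm : MeasurableSpace.comap (fun ω : ℕ → S => (fun i : Fin n => ω i)) inferInstance ≤
      (inferInstance : MeasurableSpace (ℕ → S)) := hπ.comap_le
  have hsA : MeasurableSet ((fun ω : ℕ → S => ω (n + d)) ⁻¹' A) := (measurable_pi_apply _) hA
  have hf : Integrable (Set.indicator ((fun ω : ℕ → S => ω (n + d)) ⁻¹' A) (fun _ => (1:ℝ))) P :=
    (integrable_const (1:ℝ)).indicator hsA
  have hQm : Measurable (fun x : Fin n → S => (predK κ d n x A).toReal) :=
    (Kernel.measurable_coe _ hA).ennreal_toReal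
  have hQb : ∀ x : Fin n → S, (predK κ d n x A).toReal ≤ 1 := fun x => by
    simpa using ENNReal.toReal_mono ENNReal.one_ne_top prob_le_one
  have hgint : Integrable (fun ω : ℕ → S => (predK κ d n (fun i : Fin n => ω i) A).toReal) P := by
    refine Integrable.mono' (integrable_const (1:ℝ)) ((hQm.comp hπ).aestronglyMeasurable) ?_
    refine Filter.Eventually.of_forall fun ω => ?_
    rw [Real.norm_eq_abs, abs_of_nonneg ENNReal.toReal_nonneg]
    exact hQb _
  haveI : SigmaFinite (P.trim hm) := (isFiniteMeasure_trim hm).toSigmaFinite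
  refine (ae_eq_condExp_of_forall_setIntegral_eq hm hf ?_ ?_ ?_).symm
  · intro s _ _
    exact hgint.integrableOn
  · rintro s ⟨t, ht, rfl⟩ _
    have h1 : ∫ ω in (fun ω : ℕ → S => (fun i : Fin n => ω i)) ⁻¹' t,
        (predK κ d n (fun i : Fin n => ω i) A).toReal ∂P
        = (∫⁻ x in t, predK κ d n x A ∂(stratFDD κ n)).toReal := by
      rw [← setIntegral_map ht (hQm.aestronglyMeasurable) hπ.aemeasurable, hP n]
      exact integral_toReal ((Kernel.measurable_coe _ hA).aemeasurable)
        (Filter.Eventually.of_forall fun x => measure_lt_top _ _)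
    have h2 : ∫ ω in (fun ω : ℕ → S => (fun i : Fin n => ω i)) ⁻¹' t,
        Set.indicator ((fun ω : ℕ → S => ω (n + d)) ⁻¹' A) (fun _ => (1:ℝ)) ω ∂P
        = (P ((fun ω : ℕ → S => (fun i : Fin n => ω i)) ⁻¹' t
            ∩ (fun ω : ℕ → S => ω (n + d)) ⁻¹' A)).toReal := by
      rw [setIntegral_indicator hsA, setIntegral_const]
      simp
      rfl
    rw [h1, h2, core κ P hP d n t ht A hA]
  · refine StronglyMeasurable.aestronglyMeasurable ?_
    refine Measurable.stronglyMeasurable ?_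
    exact hQm.comp (comap_measurable _)


lemma ae_point {α : Type*} [MeasurableSpace α] [Subsingleton α] {μ : Measure α}
    [IsProbabilityMeasure μ] {p : α → Prop} (h : ∀ᵐ x ∂μ, p x) (a : α) : p a := by
  by_contra hpa
  rw [ae_iff] at h
  have hset : {x : α | ¬ p x} = Set.univ := by
    apply Set.eq_univ_of_forall
    intro x
    simpa [Subsingleton.elim x a] using hpa
  rw [hset] at h
  simp [measure_univ] at h

lemma predK_eq_of_step
    (hstep : ∀ (n : ℕ) (A : Set S), MeasurableSet A →
      ∀ᵐ x ∂(stratFDD κ n), κ n x A = ∫⁻ y, κ (n + 1) (Fin.snoc x y) A ∂(κ n x)) :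
    ∀ (d n : ℕ) (A : Set S), MeasurableSet A →
      ∀ᵐ x ∂(stratFDD κ n), predK κ d n x A = κ n x A := by
  intro d
  induction d with
  | zero => exact fun n A hA => Filter.Eventually.of_forall fun x => rfl
  | succ d ih =>
    intro n A hA
    have IH := ih (n + 1) A hA
    rw [ae_iff] at IH
    have hNm : MeasurableSet {z : Fin (n + 1) → S | ¬ predK κ d (n + 1) z A = κ (n + 1) z A} := by
      have heq : {z : Fin (n + 1) → S | predK κ d (n + 1) z A = κ (n + 1) z A}
          = {z | predK κ d (n + 1) z A ≤ κ (n + 1) z A}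
            ∩ {z | κ (n + 1) z A ≤ predK κ d (n + 1) z A} := by
        ext z
        simp [le_antisymm_iff]
      have : MeasurableSet {z : Fin (n + 1) → S | predK κ d (n + 1) z A = κ (n + 1) z A} := by
        rw [heq]
        exact (measurableSet_le (Kernel.measurable_coe _ hA) (Kernel.measurable_coe _ hA)).inter
          (measurableSet_le (Kernel.measurable_coe _ hA) (Kernel.measurable_coe _ hA))
      simpa [Set.compl_setOf] using this.compl
    rw [stratFDD_succ_apply κ n hNm] at IH
    have hmeas : Measurable fun x : Fin n → S =>
        κ n x {y | Fin.snoc x y ∈ {z : Fin (n + 1) → S | ¬ predK κ d (n + 1) z A = κ (n + 1) z A}} :=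
      Kernel.measurable_kernel_prodMk_left ((measurable_snoc_pair n) hNm)
    have hae := (lintegral_eq_zero_iff hmeas).mp IH
    filter_upwards [hae, hstep n A hA] with x hx1 hx2
    rw [predK_succ_apply κ d n x hA]
    have hae2 : ∀ᵐ y ∂(κ n x), predK κ d (n + 1) (Fin.snoc x y) A = κ (n + 1) (Fin.snoc x y) A := by
      rw [ae_iff]
      exact hx1
    rw [lintegral_congr_ae hae2]
    exact hx2.symm

end Aux

/-- **Theorem (characterization of c.i.d. laws in terms of strategies).**
Let `κ` be a strategy. The coordinate process is c.i.d. under `P_κ` if and only if,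
for every `n ≥ 0` and every measurable `A`, one has
`κ_n(x, A) = ∫ κ_{n+1}((x, y), A) κ_n(x, dy)` for `P_κ`-almost all `x ∈ Sⁿ`. -/
theorem cid_iff_strategy {S : Type*} [MeasurableSpace S] [StandardBorelSpace S] [Nonempty S]
    (κ : ∀ n, Kernel (Fin n → S) S) [∀ n, IsMarkovKernel (κ n)]
    (P : Measure (ℕ → S)) [IsProbabilityMeasure P] (hP : IsStrategyLaw κ P) :
    CID P (fun n ω => ω n) ↔
      ∀ (n : ℕ) (A : Set S), MeasurableSet A →
        ∀ᵐ x ∂(P.map (fun ω (i : Fin n) => ω i)),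
          κ n x A = ∫⁻ y, κ (n + 1) (Fin.snoc x y) A ∂(κ n x) := by
  have hcard : ∀ (dd : ℕ) (A : Set S), MeasurableSet A →
      P ((fun ω : ℕ → S => ω (0 + dd)) ⁻¹' A) = predK κ dd 0 (fun i : Fin 0 => i.elim0) A := by
    intro dd A hA
    have hcore := core κ P hP dd 0 Set.univ MeasurableSet.univ A hA
    rw [Set.preimage_univ, Set.univ_inter, Measure.restrict_univ, stratFDD_zero'] at hcore
    rwa [lintegral_dirac' _ (Kernel.measurable_coe _ hA)] at hcore
  constructor
  · intro hcid n A hA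
    match n with
    | 0 =>
      suffices hpt : κ 0 (fun i : Fin 0 => i.elim0) A
          = ∫⁻ y, κ 1 (Fin.snoc (fun i : Fin 0 => i.elim0) y) A
              ∂(κ 0 (fun i : Fin 0 => i.elim0)) by
        refine Filter.Eventually.of_forall fun x => ?_
        rw [Subsingleton.elim x (fun i : Fin 0 => i.elim0)]
        exact hpt
      have h01 : P.map (fun ω : ℕ → S => ω 1) = P.map (fun ω : ℕ → S => ω 0) := hcid.1
      have hA1 : P ((fun ω : ℕ → S => ω 1) ⁻¹' A) = P ((fun ω : ℕ → S => ω 0) ⁻¹' A) := by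
        rw [← Measure.map_apply (measurable_pi_apply 1) hA,
          ← Measure.map_apply (measurable_pi_apply 0) hA, h01]
      have hc1 : P ((fun ω : ℕ → S => ω 1) ⁻¹' A) = predK κ 1 0 (fun i : Fin 0 => i.elim0) A :=
        hcard 1 A hA
      have hc0 : P ((fun ω : ℕ → S => ω 0) ⁻¹' A) = predK κ 0 0 (fun i : Fin 0 => i.elim0) A :=
        hcard 0 A hA
      have : predK κ 1 0 (fun i : Fin 0 => i.elim0) A = κ 0 (fun i : Fin 0 => i.elim0) A := by
        rw [← hc1, hA1, hc0]; rfl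
      rw [← this, predK_succ_apply κ 0 0 _ hA]
      rfl
    | (n + 1) =>
      have h2 := hcid.2 (n + 1) (n + 1 + 1) (by omega) (by omega) A hA
      have v1 := condexp_version κ P hP (n + 1) 1 hA
      have v0 := condexp_version κ P hP (n + 1) 0 hA
      have hEq : (fun ω : ℕ → S => (predK κ 1 (n + 1) (fun i : Fin (n + 1) => ω i) A).toReal)
          =ᵐ[P] (fun ω : ℕ → S =>
            (predK κ 0 (n + 1) (fun i : Fin (n + 1) => ω i) A).toReal) :=
        v1.symm.trans (h2.trans v0)
      have hQm1 : Measurable (fun x : Fin (n + 1) → S => (predK κ 1 (n + 1) x A).toReal) :=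
        (Kernel.measurable_coe _ hA).ennreal_toReal
      have hQm0 : Measurable (fun x : Fin (n + 1) → S => (predK κ 0 (n + 1) x A).toReal) :=
        (Kernel.measurable_coe _ hA).ennreal_toReal
      have hs : MeasurableSet {x : Fin (n + 1) → S |
          (predK κ 1 (n + 1) x A).toReal = (predK κ 0 (n + 1) x A).toReal} :=
        measurableSet_eq_fun hQm1 hQm0
      have hmap : ∀ᵐ x ∂(P.map (fun ω : ℕ → S => (fun i : Fin (n + 1) => ω i))),
          (predK κ 1 (n + 1) x A).toReal = (predK κ 0 (n + 1) x A).toReal :=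
        (ae_map_iff (measurable_proj (n + 1)).aemeasurable hs).mpr hEq
      filter_upwards [hmap] with x hx
      have hx' : predK κ 1 (n + 1) x A = predK κ 0 (n + 1) x A :=
        (ENNReal.toReal_eq_toReal_iff' (measure_ne_top _ _) (measure_ne_top _ _)).mp hx
      have : κ (n + 1) x A = predK κ 1 (n + 1) x A := hx'.symm
      rw [this, predK_succ_apply κ 0 (n + 1) x hA]
      rfl
  · intro h
    have hstep : ∀ (n : ℕ) (A : Set S), MeasurableSet A →
        ∀ᵐ x ∂(stratFDD κ n), κ n x A = ∫⁻ y, κ (n + 1) (Fin.snoc x y) A ∂(κ n x) := by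
      intro n A hA
      have := h n A hA
      rwa [hP n] at this
    have hall := predK_eq_of_step κ hstep
    constructor
    · refine Measure.ext fun A hA => ?_
      rw [Measure.map_apply (measurable_pi_apply 1) hA,
        Measure.map_apply (measurable_pi_apply 0) hA]
      have hc1 : P ((fun ω : ℕ → S => ω 1) ⁻¹' A) = predK κ 1 0 (fun i : Fin 0 => i.elim0) A :=
        hcard 1 A hA
      have hc0 : P ((fun ω : ℕ → S => ω 0) ⁻¹' A) = predK κ 0 0 (fun i : Fin 0 => i.elim0) A :=
        hcard 0 A hA
      have h0 := ae_point (hstep 0 A hA) (fun i : Fin 0 => i.elim0)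
      have : predK κ 1 0 (fun i : Fin 0 => i.elim0) A = κ 0 (fun i : Fin 0 => i.elim0) A := by
        rw [predK_succ_apply κ 0 0 _ hA]
        exact h0.symm
      rw [hc1, hc0, this]
      rfl
    · intro n m hn hm A hA
      obtain ⟨d, rfl⟩ : ∃ d, m = n + d := ⟨m - n, by omega⟩
      have v1 := condexp_version κ P hP n d hA
      have v0 := condexp_version κ P hP n 0 hA
      refine v1.trans (Filter.EventuallyEq.trans ?_ v0.symm)
      have hae := hall d n A hA
      rw [← hP n] at hae
      have hP' := ae_of_ae_map (measurable_proj n).aemeasurable hae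
      filter_upwards [hP'] with ω hω
      rw [hω]
      rfl

end PredictiveBayes
end

section
/- Let λ be a σ-finite measure on (S, B) and σ a strategy dominated by λ with densities f_n, and let g_n(x) = f_0(x_1) f_1(x_2 | x_1) ··· f_{n−1}(x_n | x_1, ..., x_{n−1}). Then P_σ is exchangeable if and only if, for every n ≥ 2 and every permutation φ of S^n, g_n(φ(x)) = g_n(x) for P_σ∘(X_1, ..., X_n)^{−1}-almost all x ∈ S^n. -/
open MeasureTheory ProbabilityTheory
open scoped ENNReal

namespace PredictiveBayes

variable {S : Type*} [MeasurableSpace S]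

/-- The process `Y` is exchangeable under `P`. -/
def Exchangeable {Ω : Type*} [MeasurableSpace Ω] (P : Measure Ω) (Y : ℕ → Ω → S) : Prop :=
  ∀ (n : ℕ) (e : Equiv.Perm (Fin n)),
    P.map (fun ω (i : Fin n) => Y (e i) ω) = P.map (fun ω (i : Fin n) => Y i ω)

/-- Given predictive densities `f`, `jointDensity f n` is the function
`g_n(x) = f_0(x_1) f_1(x_2 | x_1) ⋯ f_{n-1}(x_n | x_1, …, x_{n-1})`. -/
noncomputable def jointDensity (f : ∀ n, (Fin n → S) → S → ℝ≥0∞) : ∀ n, (Fin n → S) → ℝ≥0∞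
  | 0 => fun _ => 1
  | n + 1 => fun x => jointDensity f n (Fin.init x) * f n (Fin.init x) (x (Fin.last n))

/-! ### Auxiliary lemmas -/

lemma measurable_permMap {n : ℕ} (e : Equiv.Perm (Fin n)) :
    Measurable (fun (x : Fin n → S) (i : Fin n) => x (e i)) :=
  measurable_pi_lambda _ fun i => measurable_pi_apply (e i)

lemma measurable_snocFun {n : ℕ} :
    Measurable (fun p : (Fin n → S) × S => (Fin.snoc p.1 p.2 : Fin (n + 1) → S)) := by
  apply measurable_pi_iff.2
  intro i
  induction i using Fin.lastCases with
  | last => simpa only [Fin.snoc_last] using measurable_snd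
  | cast j => simpa only [Fin.snoc_castSucc, Function.comp_def] using (measurable_pi_apply j).comp measurable_fst

lemma measurable_jointDensity (f : ∀ n, (Fin n → S) → S → ℝ≥0∞)
    (hf : ∀ n, Measurable (fun p : (Fin n → S) × S => f n p.1 p.2)) :
    ∀ n, Measurable (jointDensity f n)
  | 0 => measurable_const
  | (n + 1) => by
      have hinit : Measurable (fun x : Fin (n + 1) → S => Fin.init x) :=
        measurable_pi_lambda _ fun i => measurable_pi_apply i.castSucc
      exact ((measurable_jointDensity f hf n).comp hinit).mul
        ((hf n).comp (hinit.prodMk (measurable_pi_apply (Fin.last n))))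

lemma jointDensity_snoc (f : ∀ n, (Fin n → S) → S → ℝ≥0∞) (n : ℕ) (x : Fin n → S) (y : S) :
    jointDensity f (n + 1) (Fin.snoc x y) = jointDensity f n x * f n x y := by
  simp [jointDensity, Fin.init_snoc, Fin.snoc_last]

lemma pi_map_permMap (lam : Measure S) [SigmaFinite lam] {n : ℕ} (e : Equiv.Perm (Fin n)) :
    (Measure.pi fun _ : Fin n => lam).map (fun x i => x (e i))
      = Measure.pi fun _ : Fin n => lam := by
  refine (Measure.pi_eq fun s hs => ?_).symm
  rw [Measure.map_apply (measurable_permMap e) (MeasurableSet.univ_pi hs)]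
  have hpre : (fun (x : Fin n → S) (i : Fin n) => x (e i)) ⁻¹' Set.pi Set.univ s
      = Set.pi Set.univ fun j => s (e.symm j) := by
    ext x
    simp only [Set.mem_preimage, Set.mem_univ_pi]
    constructor
    · intro h j; simpa using h (e.symm j)
    · intro h i; simpa using h (e i)
  rw [hpre, Measure.pi_pi]
  exact Equiv.prod_comp e.symm fun j => lam (s j)

lemma withDensity_map_permMap {n : ℕ} (lam : Measure S) [SigmaFinite lam]
    (g : (Fin n → S) → ℝ≥0∞) (hg : Measurable g) (e : Equiv.Perm (Fin n)) :
    ((Measure.pi fun _ : Fin n => lam).withDensity g).map (fun x i => x (e i))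
      = (Measure.pi fun _ : Fin n => lam).withDensity
          (fun x => g (fun i => x (e.symm i))) := by
  ext A hA
  rw [Measure.map_apply (measurable_permMap e) hA,
    withDensity_apply _ (measurable_permMap e hA), withDensity_apply _ hA]
  conv_rhs => rw [← pi_map_permMap lam e]
  rw [setLIntegral_map (f := fun x : Fin n → S => g fun i => x (e.symm i))
    (g := fun (x : Fin n → S) i => x (e i)) hA
    (hg.comp (measurable_permMap e.symm)) (measurable_permMap e)]
  refine setLIntegral_congr_fun (measurable_permMap e hA) (fun x _ => ?_)
  congr 1
  funext i
  simp

/-- The finite dimensional distributions of a dominated strategy have density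
`jointDensity f n` with respect to `lam^n`. -/
lemma stratFDD_eq (lam : Measure S) [SigmaFinite lam]
    (f : ∀ n, (Fin n → S) → S → ℝ≥0∞)
    (hf : ∀ n, Measurable (fun p : (Fin n → S) × S => f n p.1 p.2))
    (κ : ∀ n, Kernel (Fin n → S) S) [∀ n, IsMarkovKernel (κ n)]
    (hκ : ∀ n (x : Fin n → S), κ n x = lam.withDensity (f n x)) :
    ∀ n, stratFDD κ n = (Measure.pi fun _ : Fin n => lam).withDensity (jointDensity f n)
  | 0 => by
      have h1 : (jointDensity f 0 : (Fin 0 → S) → ℝ≥0∞) = 1 := rfl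
      rw [h1, withDensity_one, Measure.pi_of_empty, stratFDD]
      exact congrArg _ (Subsingleton.elim _ _)
  | (n + 1) => by
      have IH := stratFDD_eq lam f hf κ hκ n
      have hg := measurable_jointDensity f hf
      have hsnoc : Measurable
          (fun p : (Fin n → S) × S => (Fin.snoc p.1 p.2 : Fin (n + 1) → S)) :=
        measurable_snocFun
      set sn : (Fin n → S) × S → (Fin (n + 1) → S) := fun p => Fin.snoc p.1 p.2 with hsn
      have hm : Measurable (fun x : Fin n → S =>
          ((κ n) x).map (Fin.snoc (α := fun _ : Fin (n + 1) => S) x)) := by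
        refine Measure.measurable_of_measurable_coe _ fun A hA => ?_
        have heq : ∀ x : Fin n → S, ((κ n) x).map (Fin.snoc (α := fun _ : Fin (n + 1) => S) x) A
            = (κ n) x (Prod.mk x ⁻¹' (sn ⁻¹' A)) := by
          intro x
          rw [Measure.map_apply (f := Fin.snoc (α := fun _ : Fin (n + 1) => S) x)
            (hsnoc.comp measurable_prodMk_left) hA]
          rfl
        simp_rw [heq]
        exact Kernel.measurable_kernel_prodMk_left (hsnoc hA)
      ext A hA
      have hmA : Measurable fun x : Fin n → S =>
          ((κ n) x).map (Fin.snoc (α := fun _ : Fin (n + 1) => S) x) A :=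
        (Measure.measurable_coe hA).comp hm
      rw [stratFDD, IH, Measure.bind_apply hA hm.aemeasurable,
        lintegral_withDensity_eq_lintegral_mul _ (hg n) hmA]
      have hEP := (measurePreserving_piFinSuccAbove
        (fun _ : Fin (n + 1) => lam) (Fin.last n)).symm
      rw [withDensity_apply _ hA, ← lintegral_indicator hA,
        ← hEP.lintegral_comp ((hg (n + 1)).indicator hA),
        lintegral_prod_symm
          (f := fun a : S × (Fin n → S) => A.indicator (jointDensity f (n + 1))
            ((MeasurableEquiv.piFinSuccAbove (fun _ : Fin (n + 1) => S) (Fin.last n)).symm a))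
          (((hg (n + 1)).indicator hA).comp (MeasurableEquiv.measurable _)).aemeasurable]
      have hEsymm : ∀ (y : S) (x : Fin n → S),
          (MeasurableEquiv.piFinSuccAbove (fun _ : Fin (n + 1) => S) (Fin.last n)).symm (y, x)
            = Fin.snoc x y := by
        intro y x
        simp [MeasurableEquiv.piFinSuccAbove_symm_apply, Fin.insertNth_last',
          Fin.snocEquiv]
      have key : ∀ x : Fin n → S,
          (∫⁻ y, A.indicator (jointDensity f (n + 1)) (Fin.snoc x y) ∂lam)
            = jointDensity f n x * ((κ n) x).map (Fin.snoc x) A := by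
        intro x
        have hxm : Measurable (Fin.snoc (α := fun _ : Fin (n + 1) => S) x) :=
          hsnoc.comp measurable_prodMk_left
        have hpre : MeasurableSet ((Fin.snoc (α := fun _ : Fin (n + 1) => S) x) ⁻¹' A) := hxm hA
        have hfx : Measurable (f n x) := (hf n).comp measurable_prodMk_left
        calc (∫⁻ y, A.indicator (jointDensity f (n + 1)) (Fin.snoc x y) ∂lam)
            = ∫⁻ y, ((Fin.snoc (α := fun _ : Fin (n + 1) => S) x) ⁻¹' A).indicator
                (fun y => jointDensity f n x * f n x y) y ∂lam := by
              refine lintegral_congr fun y => ?_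
              by_cases hy : Fin.snoc x y ∈ A
              · rw [Set.indicator_of_mem hy, Set.indicator_of_mem
                  (show y ∈ Fin.snoc (α := fun _ : Fin (n + 1) => S) x ⁻¹' A from hy),
                  jointDensity_snoc]
              · rw [Set.indicator_of_notMem hy, Set.indicator_of_notMem
                  (show y ∉ Fin.snoc (α := fun _ : Fin (n + 1) => S) x ⁻¹' A from hy)]
          _ = jointDensity f n x
              * ∫⁻ y in (Fin.snoc (α := fun _ : Fin (n + 1) => S) x) ⁻¹' A, f n x y ∂lam := by
              rw [lintegral_indicator hpre, lintegral_const_mul _ hfx]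
          _ = jointDensity f n x * ((κ n) x).map (Fin.snoc x) A := by
              rw [Measure.map_apply hxm hA, hκ n x, withDensity_apply _ hpre]
      refine lintegral_congr fun x => ?_
      simp only [Pi.mul_apply]
      symm
      calc (∫⁻ y, A.indicator (jointDensity f (n + 1))
              ((MeasurableEquiv.piFinSuccAbove (fun _ : Fin (n + 1) => S)
                (Fin.last n)).symm (y, x)) ∂lam)
          = ∫⁻ y, A.indicator (jointDensity f (n + 1)) (Fin.snoc x y) ∂lam := by
            refine lintegral_congr fun y => ?_
            rw [hEsymm]
        _ = jointDensity f n x * ((κ n) x).map (Fin.snoc x) A := key x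

/-- The group trick: if `g ∘ φ = g` a.e. with respect to `λⁿ.withDensity g` for all
permutations `φ`, then the same holds a.e. with respect to `λⁿ`. -/
lemma perm_ae_of_ae_withDensity {n : ℕ} (lam : Measure S) [SigmaFinite lam]
    (g : (Fin n → S) → ℝ≥0∞) (hg : Measurable g)
    (H : ∀ e : Equiv.Perm (Fin n),
      ∀ᵐ x ∂((Measure.pi fun _ : Fin n => lam).withDensity g),
        g (fun i => x (e i)) = g x)
    (e : Equiv.Perm (Fin n)) :
    ∀ᵐ x ∂(Measure.pi fun _ : Fin n => lam), g (fun i => x (e i)) = g x := by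
  have h1 : ∀ᵐ x ∂(Measure.pi fun _ : Fin n => lam),
      g x ≠ 0 → g (fun i => x (e i)) = g x := (ae_withDensity_iff hg).1 (H e)
  have h2 : ∀ᵐ x ∂(Measure.pi fun _ : Fin n => lam),
      g x ≠ 0 → g (fun i => x (e.symm i)) = g x := (ae_withDensity_iff hg).1 (H e.symm)
  have hmap := pi_map_permMap lam e
  have hmeas : MeasurableSet
      {x : Fin n → S | g x ≠ 0 → g (fun i => x (e.symm i)) = g x} := by
    have hset : {x : Fin n → S | g x ≠ 0 → g (fun i => x (e.symm i)) = g x}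
        = {x | g x = 0} ∪ {x | g (fun i => x (e.symm i)) = g x} := by
      ext x; simp [imp_iff_not_or]
    rw [hset]
    exact (hg (measurableSet_singleton 0)).union
      (measurableSet_eq_fun (hg.comp (measurable_permMap e.symm)) hg)
  rw [← hmap] at h2
  have h2' := (ae_map_iff (measurable_permMap e).aemeasurable hmeas).1 h2
  have h2'' : ∀ᵐ x ∂(Measure.pi fun _ : Fin n => lam),
      g (fun i => x (e i)) ≠ 0 → g x = g (fun i => x (e i)) := by
    filter_upwards [h2'] with x hx h0
    have h := hx h0
    have hid : (fun i => x (e (e.symm i))) = x := by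
      funext i; simp
    rw [hid] at h
    exact h
  filter_upwards [h1, h2''] with x hx1 hx2
  rcases eq_or_ne (g x) 0 with h0 | h0
  · rcases eq_or_ne (g (fun i => x (e i))) 0 with h0' | h0'
    · rw [h0, h0']
    · exact (hx2 h0').symm
  · exact hx1 h0

/-- **Theorem (exchangeability for dominated strategies).** Let `λ` be a σ-finite
measure and `κ` a strategy dominated by `λ`, with predictive densities `f_n(· | x)` and
joint densities `g_n`. Then `P_κ` is exchangeable if and only if, for every `n ≥ 2` and
every permutation `φ` of `Sⁿ`, `g_n(φ(x)) = g_n(x)` for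
`P_κ ∘ (X_1, …, X_n)⁻¹`-almost all `x ∈ Sⁿ`. -/
theorem dominated_exchangeable_iff {S : Type*} [MeasurableSpace S] [StandardBorelSpace S]
    [Nonempty S]
    (lam : Measure S) [SigmaFinite lam]
    (f : ∀ n, (Fin n → S) → S → ℝ≥0∞)
    (hf : ∀ n, Measurable (fun p : (Fin n → S) × S => f n p.1 p.2))
    (κ : ∀ n, Kernel (Fin n → S) S) [∀ n, IsMarkovKernel (κ n)]
    (hκ : ∀ n (x : Fin n → S), κ n x = lam.withDensity (f n x))
    (P : Measure (ℕ → S)) [IsProbabilityMeasure P] (hP : IsStrategyLaw κ P) :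
    Exchangeable P (fun n ω => ω n) ↔
      ∀ n : ℕ, 2 ≤ n → ∀ e : Equiv.Perm (Fin n),
        ∀ᵐ x ∂(P.map (fun ω (i : Fin n) => ω i)),
          jointDensity f n (fun i => x (e i)) = jointDensity f n x := by
  have hg := measurable_jointDensity f hf
  have hFDD := stratFDD_eq lam f hf κ hκ
  have hcoord : ∀ n, Measurable (fun (ω : ℕ → S) (i : Fin n) => ω i) := fun n =>
    measurable_pi_lambda _ fun i => measurable_pi_apply (i : ℕ)
  -- reformulation of exchangeability through the fdds
  have hmapP : ∀ (n : ℕ) (e : Equiv.Perm (Fin n)),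
      P.map (fun ω (i : Fin n) => ω (e i))
        = (stratFDD κ n).map (fun x i => x (e i)) := by
    intro n e
    rw [← hP n, Measure.map_map (measurable_permMap e) (hcoord n)]
    rfl
  -- measure-equality `↔` a.e.-equality of densities w.r.t. `lam^n`
  have hkey : ∀ (n : ℕ) (e : Equiv.Perm (Fin n)),
      ((stratFDD κ n).map (fun x i => x (e i)) = stratFDD κ n
        ↔ (fun x => jointDensity f n (fun i => x (e.symm i)))
            =ᵐ[Measure.pi fun _ : Fin n => lam] jointDensity f n) := by
    intro n e
    rw [hFDD n, withDensity_map_permMap lam _ (hg n) e]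
    exact withDensity_eq_iff_of_sigmaFinite
      (((hg n).comp (measurable_permMap e.symm)).aemeasurable) (hg n).aemeasurable
  constructor
  · intro hex n _ e
    rw [hP n, hFDD n]
    have hmeq : (stratFDD κ n).map (fun x i => x (e.symm i)) = stratFDD κ n := by
      rw [← hmapP n e.symm]
      have := hex n e.symm
      rwa [hP n] at this
    have hae := (hkey n e.symm).1 hmeq
    simp only [Equiv.symm_symm] at hae
    exact (withDensity_absolutelyContinuous _ _).ae_le hae
  · intro h n e
    show P.map (fun ω (i : Fin n) => ω (e i)) = P.map (fun ω (i : Fin n) => ω i)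
    by_cases hn : 2 ≤ n
    · rw [hP n, hmapP n e]
      refine (hkey n e).2 ?_
      refine perm_ae_of_ae_withDensity lam _ (hg n) (fun e' => ?_) e.symm
      have := h n hn e'
      rwa [hP n, hFDD n] at this
    · have hid : ∀ i : Fin n, e i = i := by
        intro i
        have hsub : Subsingleton (Fin n) := by
          interval_cases n
          · infer_instance
          · infer_instance
        exact Subsingleton.elim _ _
      have : (fun (ω : ℕ → S) (i : Fin n) => ω (e i)) = fun ω i => ω i := by
        funext ω i; rw [hid i]
      rw [this]

end PredictiveBayes
end

section
/- Let ν be a probability measure on (S, B) and, for each n ≥ 0, let q_n : S^n → [0,1] be measurable (q_0 constant). Define the recursive strategy σ by σ_0 = ν and σ_{n+1}(x, y) = q_n(x) σ_n(x) + (1 − q_n(x)) δ_y for all n ≥ 0, x ∈ S^n and y ∈ S. Then the coordinate process X is conditionally identically distributed (c.i.d.) under P_σ. -/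
open MeasureTheory ProbabilityTheory
open scoped ENNReal

namespace PredictiveBayes

variable {S : Type*} [MeasurableSpace S]

/- ### Auxiliary lemmas -/

/-- Non-dependent version of `Fin.snoc`. -/
def snocFun {n : ℕ} (x : Fin n → S) (y : S) : Fin (n + 1) → S := Fin.snoc x y

lemma snocFun_last {n : ℕ} (x : Fin n → S) (y : S) : snocFun x y (Fin.last n) = y := by
  simp [snocFun]

lemma snocFun_castSucc {n : ℕ} (x : Fin n → S) (y : S) (i : Fin n) :
    snocFun x y (Fin.castSucc i) = x i := by
  simp [snocFun]

lemma init_snocFun {n : ℕ} (x : Fin n → S) (y : S) : Fin.init (snocFun x y) = x := by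
  simp [snocFun]

lemma measurable_snoc2 {n : ℕ} :
    Measurable (fun p : (Fin n → S) × S => snocFun p.1 p.2) := by
  apply measurable_pi_lambda
  intro i
  refine Fin.lastCases ?_ ?_ i
  · simpa only [snocFun_last] using measurable_snd
  · intro j
    simpa only [snocFun_castSucc, Function.comp_def] using (measurable_pi_apply j).comp measurable_fst

lemma measurable_snoc_left_s13 {n : ℕ} (x : Fin n → S) :
    Measurable (snocFun x) :=
  measurable_snoc2.comp measurable_prodMk_left

lemma measurable_bindfun {n : ℕ} (κ : Kernel (Fin n → S) S) [IsSFiniteKernel κ] :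
    Measurable (fun x : Fin n → S => (κ x).map (snocFun x)) := by
  apply Measure.measurable_of_measurable_coe
  intro s hs
  simp_rw [Measure.map_apply (measurable_snoc_left_s13 _) hs]
  exact Kernel.measurable_kernel_prodMk_left (measurable_snoc2 hs)

lemma stratFDD_succ_apply_s13 {κ : ∀ n, Kernel (Fin n → S) S} [∀ n, IsSFiniteKernel (κ n)]
    {n : ℕ} {s : Set (Fin (n + 1) → S)} (hs : MeasurableSet s) :
    stratFDD κ (n + 1) s = ∫⁻ x, (κ n) x (snocFun x ⁻¹' s) ∂ stratFDD κ n := by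
  rw [show stratFDD κ (n + 1) = (stratFDD κ n).bind (fun x => ((κ n) x).map (snocFun x))
      from rfl,
    Measure.bind_apply hs (measurable_bindfun (κ n)).aemeasurable]
  exact lintegral_congr fun x => Measure.map_apply (measurable_snoc_left_s13 x) hs

lemma isProb_stratFDD (κ : ∀ n, Kernel (Fin n → S) S) [∀ n, IsMarkovKernel (κ n)] :
    ∀ n, IsProbabilityMeasure (stratFDD κ n)
  | 0 => by
    rw [show stratFDD κ 0 = Measure.dirac (fun i : Fin 0 => i.elim0) from rfl]
    infer_instance
  | n + 1 => by
    have := isProb_stratFDD κ n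
    constructor
    rw [stratFDD_succ_apply_s13 MeasurableSet.univ]
    simp

lemma measurable_res {n m : ℕ} (h : n ≤ m) :
    Measurable (fun v : Fin m → S => fun i : Fin n => v (Fin.castLE h i)) :=
  measurable_pi_lambda _ fun i => measurable_pi_apply _

/-- The key computation: the finite dimensional distributions of the recursive strategy
satisfy the c.i.d. marginal identity. -/
lemma key {q : ∀ n, (Fin n → S) → ℝ} (hq01 : ∀ n x, q n x ∈ Set.Icc (0 : ℝ) 1)
    (κ : ∀ n, Kernel (Fin n → S) S) [∀ n, IsMarkovKernel (κ n)]
    (hκ : ∀ n (w : Fin (n + 1) → S),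
      κ (n + 1) w = ENNReal.ofReal (q n (Fin.init w)) • κ n (Fin.init w) +
        ENNReal.ofReal (1 - q n (Fin.init w)) • Measure.dirac (w (Fin.last n)))
    (n : ℕ) (B : Set (Fin n → S)) (hB : MeasurableSet B)
    (A : Set S) (hA : MeasurableSet A) :
    ∀ m, ∀ hnm : n ≤ m,
      stratFDD κ (m + 1) {v | (fun i : Fin n => v (Fin.castLE (Nat.le_succ_of_le hnm) i)) ∈ B
          ∧ v (Fin.last m) ∈ A}
      = stratFDD κ (n + 1) {v | (fun i : Fin n => v (Fin.castLE (Nat.le_succ n) i)) ∈ B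
          ∧ v (Fin.last n) ∈ A} := by
  refine Nat.le_induction rfl ?_
  intro m hnm IH
  -- notation
  have hnm1 : n ≤ m + 1 := Nat.le_succ_of_le hnm
  set T : (Fin m → S) → Set S :=
    fun w => {y : S | (fun i : Fin n => w (Fin.castLE hnm i)) ∈ B ∧ y ∈ A} with hT
  have hTmeas : ∀ w, MeasurableSet (T w) := by
    intro w
    by_cases hw : (fun i : Fin n => w (Fin.castLE hnm i)) ∈ B
    · have : T w = A := by ext y; simp [hT, hw]
      rw [this]; exact hA
    · have : T w = ∅ := by ext y; simp [hT, hw]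
      rw [this]; exact MeasurableSet.empty
  -- the two sets
  set S2 : Set (Fin (m + 2) → S) :=
    {v | (fun i : Fin n => v (Fin.castLE (Nat.le_succ_of_le (Nat.le_succ_of_le hnm)) i)) ∈ B
        ∧ v (Fin.last (m + 1)) ∈ A} with hS2
  set S1 : Set (Fin (m + 1) → S) :=
    {v | (fun i : Fin n => v (Fin.castLE (Nat.le_succ_of_le hnm) i)) ∈ B
        ∧ v (Fin.last m) ∈ A} with hS1
  have hS1meas : MeasurableSet S1 :=
    ((measurable_res (Nat.le_succ_of_le hnm)) hB).inter ((measurable_pi_apply _) hA)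
  have hS2meas : MeasurableSet S2 :=
    ((measurable_res (Nat.le_succ_of_le (Nat.le_succ_of_le hnm))) hB).inter
      ((measurable_pi_apply _) hA)
  -- goal : stratFDD (m+2) S2 = RHS ; reduce using IH to stratFDD (m+1) S1
  have main : stratFDD κ (m + 2) S2 = stratFDD κ (m + 1) S1 := by
    have hprob := isProb_stratFDD κ
    -- preimage of S2 under snoc x
    have hpre2 : ∀ x : Fin (m + 1) → S, snocFun x ⁻¹' S2 =
        {y : S | (fun i : Fin n => x (Fin.castLE hnm1 i)) ∈ B ∧ y ∈ A} := by
      intro x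
      ext y
      simp only [Set.mem_preimage, hS2, Set.mem_setOf_eq, snocFun_last]
      constructor
      · rintro ⟨h1, h2⟩
        refine ⟨?_, h2⟩
        convert h1 using 2 with i
        have : (Fin.castLE (Nat.le_succ_of_le (Nat.le_succ_of_le hnm)) i : Fin (m + 2)) =
            Fin.castSucc (Fin.castLE hnm1 i) := by ext; simp
        rw [this, snocFun_castSucc]
      · rintro ⟨h1, h2⟩
        refine ⟨?_, h2⟩
        convert h1 using 2 with i
        have : (Fin.castLE (Nat.le_succ_of_le (Nat.le_succ_of_le hnm)) i : Fin (m + 2)) =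
            Fin.castSucc (Fin.castLE hnm1 i) := by ext; simp
        rw [this, snocFun_castSucc]
    have hpre1 : ∀ w : Fin m → S, snocFun w ⁻¹' S1 = T w := by
      intro w
      ext y
      simp only [Set.mem_preimage, hS1, Set.mem_setOf_eq, snocFun_last, hT]
      constructor
      · rintro ⟨h1, h2⟩
        refine ⟨?_, h2⟩
        convert h1 using 2 with i
        have : (Fin.castLE (Nat.le_succ_of_le hnm) i : Fin (m + 1)) =
            Fin.castSucc (Fin.castLE hnm i) := by ext; simp
        rw [this, snocFun_castSucc]
      · rintro ⟨h1, h2⟩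
        refine ⟨?_, h2⟩
        convert h1 using 2 with i
        have : (Fin.castLE (Nat.le_succ_of_le hnm) i : Fin (m + 1)) =
            Fin.castSucc (Fin.castLE hnm i) := by ext; simp
        rw [this, snocFun_castSucc]
    -- the integrand on level m+1
    set F : (Fin (m + 1) → S) → ℝ≥0∞ :=
      fun x => κ (m + 1) x {y : S | (fun i : Fin n => x (Fin.castLE hnm1 i)) ∈ B ∧ y ∈ A}
      with hF
    have hFmeas : Measurable F := by
      have hU : MeasurableSet {p : (Fin (m + 1) → S) × S |
          (fun i : Fin n => p.1 (Fin.castLE hnm1 i)) ∈ B ∧ p.2 ∈ A} := by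
        exact (((measurable_res hnm1).comp measurable_fst) hB).inter (measurable_snd hA)
      exact Kernel.measurable_kernel_prodMk_left hU
    have step1 : stratFDD κ (m + 2) S2 = ∫⁻ x, F x ∂ stratFDD κ (m + 1) := by
      rw [stratFDD_succ_apply_s13 hS2meas]
      exact lintegral_congr fun x => by rw [hpre2 x]
    -- expand stratFDD (m+1) as a bind
    have step2 : ∫⁻ x, F x ∂ stratFDD κ (m + 1) =
        ∫⁻ w, ∫⁻ y, F (snocFun w y) ∂ (κ m) w ∂ stratFDD κ m := by
      rw [show stratFDD κ (m + 1) = (stratFDD κ m).bind (fun x => ((κ m) x).map (snocFun x))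
          from rfl,
        Measure.lintegral_bind (measurable_bindfun (κ m)).aemeasurable hFmeas.aemeasurable]
      exact lintegral_congr fun w => lintegral_map hFmeas (measurable_snoc_left_s13 w)
    -- compute the inner integral
    have inner : ∀ w : Fin m → S,
        ∫⁻ y, F (snocFun w y) ∂ (κ m) w = (κ m) w (T w) := by
      intro w
      have hsum : ENNReal.ofReal (q m w) + ENNReal.ofReal (1 - q m w) = 1 := by
        rw [← ENNReal.ofReal_add (hq01 m w).1 (by linarith [(hq01 m w).2])]
        norm_num
      have hFval : ∀ y : S, F (snocFun w y) =
          ENNReal.ofReal (q m w) * (κ m) w (T w) +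
            ENNReal.ofReal (1 - q m w) * (Measure.dirac y) (T w) := by
        intro y
        have h1 : Fin.init (snocFun w y) = w := init_snocFun w y
        have h2 : snocFun w y (Fin.last m) = y := snocFun_last w y
        have hset : {z : S |
            (fun i : Fin n => snocFun w y (Fin.castLE hnm1 i)) ∈ B
              ∧ z ∈ A} = T w := by
          ext z
          simp only [Set.mem_setOf_eq, hT]
          constructor
          · rintro ⟨ha, hb⟩
            refine ⟨?_, hb⟩
            convert ha using 2 with i
            have : (Fin.castLE hnm1 i : Fin (m + 1)) =
                Fin.castSucc (Fin.castLE hnm i) := by ext; simp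
            rw [this, snocFun_castSucc]
          · rintro ⟨ha, hb⟩
            refine ⟨?_, hb⟩
            convert ha using 2 with i
            have : (Fin.castLE hnm1 i : Fin (m + 1)) =
                Fin.castSucc (Fin.castLE hnm i) := by ext; simp
            rw [this, snocFun_castSucc]
        rw [hF]
        simp only [hset]
        rw [hκ m (snocFun w y), h1, h2]
        simp [Measure.add_apply, Measure.smul_apply, smul_eq_mul]
      simp_rw [hFval]
      rw [lintegral_add_left measurable_const]
      have hd : ∀ y : S, (Measure.dirac y) (T w) = (T w).indicator (1 : S → ℝ≥0∞) y :=
        fun y => Measure.dirac_apply' y (hTmeas w)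
      simp_rw [hd]
      rw [lintegral_const_mul _ (measurable_one.indicator (hTmeas w)),
        lintegral_indicator_one (hTmeas w), lintegral_const, measure_univ, mul_one]
      rw [← add_mul, hsum, one_mul]
    -- the right-hand side
    have step3 : stratFDD κ (m + 1) S1 = ∫⁻ w, (κ m) w (T w) ∂ stratFDD κ m := by
      rw [stratFDD_succ_apply_s13 hS1meas]
      exact lintegral_congr fun w => by rw [hpre1 w]
    rw [step1, step2, step3]
    exact lintegral_congr fun w => inner w
  calc stratFDD κ (m + 1 + 1) _ = stratFDD κ (m + 1) S1 := main
    _ = _ := IH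

/-- Transfer of the key identity to the law `P`. -/
lemma lawP {q : ∀ n, (Fin n → S) → ℝ} (hq01 : ∀ n x, q n x ∈ Set.Icc (0 : ℝ) 1)
    (κ : ∀ n, Kernel (Fin n → S) S) [∀ n, IsMarkovKernel (κ n)]
    (hκ : ∀ n (w : Fin (n + 1) → S),
      κ (n + 1) w = ENNReal.ofReal (q n (Fin.init w)) • κ n (Fin.init w) +
        ENNReal.ofReal (1 - q n (Fin.init w)) • Measure.dirac (w (Fin.last n)))
    (P : Measure (ℕ → S)) (hP : IsStrategyLaw κ P)
    (n m : ℕ) (hnm : n ≤ m) (B : Set (Fin n → S)) (hB : MeasurableSet B)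
    (A : Set S) (hA : MeasurableSet A) :
    P ((fun ω (i : Fin n) => ω i) ⁻¹' B ∩ (fun ω : ℕ → S => ω m) ⁻¹' A)
      = P ((fun ω (i : Fin n) => ω i) ⁻¹' B ∩ (fun ω : ℕ → S => ω n) ⁻¹' A) := by
  have hgen : ∀ (k : ℕ) (hnk : n ≤ k),
      P ((fun ω (i : Fin n) => ω i) ⁻¹' B ∩ (fun ω : ℕ → S => ω k) ⁻¹' A)
        = stratFDD κ (k + 1)
          {v | (fun i : Fin n => v (Fin.castLE (Nat.le_succ_of_le hnk) i)) ∈ B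
            ∧ v (Fin.last k) ∈ A} := by
    intro k hnk
    have hproj : Measurable (fun ω : ℕ → S => fun i : Fin (k + 1) => ω i) :=
      measurable_pi_lambda _ fun i => measurable_pi_apply _
    have hsmeas : MeasurableSet
        {v : Fin (k + 1) → S | (fun i : Fin n => v (Fin.castLE (Nat.le_succ_of_le hnk) i)) ∈ B
          ∧ v (Fin.last k) ∈ A} :=
      ((measurable_res (Nat.le_succ_of_le hnk)) hB).inter ((measurable_pi_apply _) hA)
    have hset : (fun ω (i : Fin n) => ω i) ⁻¹' B ∩ (fun ω : ℕ → S => ω k) ⁻¹' A =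
        (fun ω : ℕ → S => fun i : Fin (k + 1) => ω i) ⁻¹'
          {v | (fun i : Fin n => v (Fin.castLE (Nat.le_succ_of_le hnk) i)) ∈ B
            ∧ v (Fin.last k) ∈ A} := by
      ext ω
      simp only [Set.mem_inter_iff, Set.mem_preimage, Set.mem_setOf_eq, Fin.coe_castLE,
        Fin.val_last]
    rw [hset, ← Measure.map_apply hproj hsmeas, hP (k + 1)]
  rw [hgen m hnm, hgen n le_rfl,
    key hq01 κ hκ n B hB A hA m hnm]

/-- **Theorem (recursive update with point masses is c.i.d.).** Let `ν` be a
probability measure and `q_n : Sⁿ → [0,1]` measurable. Let `κ` be the strategy defined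
recursively by `σ_0 = ν` and `σ_{n+1}(x, y) = q_n(x) σ_n(x) + (1 - q_n(x)) δ_y`. Then
the coordinate process is c.i.d. under `P_κ`. -/
theorem recursiveDirac_cid {S : Type*} [MeasurableSpace S] [StandardBorelSpace S] [Nonempty S]
    (ν : Measure S) [IsProbabilityMeasure ν]
    (q : ∀ n, (Fin n → S) → ℝ) (hqmeas : ∀ n, Measurable (q n))
    (hq01 : ∀ n x, q n x ∈ Set.Icc (0 : ℝ) 1)
    (κ : ∀ n, Kernel (Fin n → S) S) [∀ n, IsMarkovKernel (κ n)]
    (hκ0 : ∀ x : Fin 0 → S, κ 0 x = ν)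
    (hκ : ∀ n (w : Fin (n + 1) → S),
      κ (n + 1) w = ENNReal.ofReal (q n (Fin.init w)) • κ n (Fin.init w) +
        ENNReal.ofReal (1 - q n (Fin.init w)) • Measure.dirac (w (Fin.last n)))
    (P : Measure (ℕ → S)) [IsProbabilityMeasure P] (hP : IsStrategyLaw κ P) :
    CID P (fun n ω => ω n) := by
  constructor
  · -- equality of the first two marginals
    refine Measure.ext fun A hA => ?_
    rw [Measure.map_apply (measurable_pi_apply 1) hA,
      Measure.map_apply (measurable_pi_apply 0) hA]
    have := lawP hq01 κ hκ P hP 0 1 (Nat.zero_le 1) Set.univ MeasurableSet.univ A hA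
    simpa using this
  · intro n m h1n hnm A hA
    have hproj : Measurable (fun ω : ℕ → S => fun i : Fin n => ω i) :=
      measurable_pi_lambda _ fun i => measurable_pi_apply _
    have hm : MeasurableSpace.comap (fun ω (i : Fin n) => ω (i : ℕ)) MeasurableSpace.pi ≤
        (inferInstance : MeasurableSpace (ℕ → S)) := hproj.comap_le
    have hXm : MeasurableSet ((fun ω : ℕ → S => ω m) ⁻¹' A) := (measurable_pi_apply m) hA
    have hXn : MeasurableSet ((fun ω : ℕ → S => ω n) ⁻¹' A) := (measurable_pi_apply n) hA
    have hintm : Integrable (Set.indicator ((fun ω : ℕ → S => ω m) ⁻¹' A) (fun _ => (1 : ℝ))) P :=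
      (integrable_const (1 : ℝ)).indicator hXm
    have hintn : Integrable (Set.indicator ((fun ω : ℕ → S => ω n) ⁻¹' A) (fun _ => (1 : ℝ))) P :=
      (integrable_const (1 : ℝ)).indicator hXn
    have hsig : SigmaFinite (P.trim hm) := by infer_instance
    refine ae_eq_condExp_of_forall_setIntegral_eq hm hintn
      (fun s _ _ => integrable_condExp.integrableOn) (fun s hs hμs => ?_)
      stronglyMeasurable_condExp.aestronglyMeasurable
    rw [setIntegral_condExp hm hintm hs]
    obtain ⟨B, hB, rfl⟩ := hs
    rw [setIntegral_indicator hXm, setIntegral_indicator hXn, setIntegral_const,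
      setIntegral_const, smul_eq_mul, mul_one, smul_eq_mul, mul_one]
    exact congrArg ENNReal.toReal (lawP hq01 κ hκ P hP n m hnm B hB A hA)

end PredictiveBayes
end
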